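/- Let A be a finite lattice of subspaces of F (ordered by inclusion) with Möbius function μ, and C ≤ F a k-dimensional code. Define, for A ∈ A, B_A^{(j)} = [dim(C∩A) choose j]_q and W_A^{(j)} = #{D ≤ C∩A : dim D = j and A is the meet of all B ∈ A of dimension dim A containing D}. Then B_A^{(j)} = Σ_{A' ∈ A, A' ≤ A} W_{A'}^{(j)}, and consequently W_{A'}^{(j)} = Σ_{A ∈ A, A ≤ A'} μ(A, A') B_A^{(j)} by Möbius inversion. -/

import Mathlib

open scoped Classical

noncomputable section

namespace TensorCodes

/-- The Gaussian (`q`-binomial) coefficient for integer arguments, following the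
definition in the paper. -/
def qbin (q : ℚ) (a b : ℤ) : ℚ :=
  if b < 0 then 0
  else if b = 0 then 1
  else if a < 0 then
    (-1) ^ b.toNat * q ^ (a * b - b * (b - 1) / 2) *
      ∏ i ∈ Finset.range b.toNat, (q ^ (-a + b - 1 - (i : ℤ)) - 1) / (q ^ ((i : ℤ) + 1) - 1)
  else if a < b then 0
  else ∏ i ∈ Finset.range b.toNat, (q ^ (a - (i : ℤ)) - 1) / (q ^ ((i : ℤ) + 1) - 1)

variable {K : Type} [Field K] [Fintype K] {r : ℕ} {n : Fin r → ℕ}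

/-- A simple (rank-one) tensor `u⁽¹⁾ ⊗ ⋯ ⊗ u⁽ʳ⁾`, in the identification of
`𝔽_q^{n_1} ⊗ ⋯ ⊗ 𝔽_q^{n_r}` with the space of `r`-dimensional arrays. -/
def simpleTensor (u : ∀ i, Fin (n i) → K) : ((i : Fin r) → Fin (n i)) → K :=
  fun J => ∏ i, u i (J i)

/-- The tensor product `U₁ ⊗ ⋯ ⊗ U_r` of subspaces `U i ≤ 𝔽_q^{n_i}`, identified with the
subspace of the array space spanned by the corresponding simple tensors. -/
def tp (U : ∀ i, Submodule K (Fin (n i) → K)) :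
    Submodule K (((i : Fin r) → Fin (n i)) → K) :=
  Submodule.span K {X | ∃ u : ∀ i, Fin (n i) → K, (∀ i, u i ∈ U i) ∧ X = simpleTensor u}

/-- The dual (orthogonal complement) of a tensor code with respect to the nondegenerate
bilinear form `X * Y = ∑_J X_J Y_J`. -/
def tdual (C : Submodule K (((i : Fin r) → Fin (n i)) → K)) :
    Submodule K (((i : Fin r) → Fin (n i)) → K) where
  carrier := {X | ∀ Y ∈ C, ∑ J, X J * Y J = 0}
  add_mem' := by
    intro a b ha hb Y hY
    have h : ∑ J, (a J * Y J + b J * Y J) = 0 := by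
      rw [Finset.sum_add_distrib, ha Y hY, hb Y hY, add_zero]
    simpa [add_mul] using h
  zero_mem' := by intro Y hY; simp
  smul_mem' := by
    intro c a ha Y hY
    have h := ha Y hY
    simp only [Pi.smul_apply, smul_eq_mul, mul_assoc]
    rw [← Finset.mul_sum, h, mul_zero]

/-- The orthogonal complement of a subspace of `𝔽_q^m` with respect to the dot product. -/
def vdual {m : ℕ} (U : Submodule K (Fin m → K)) : Submodule K (Fin m → K) where
  carrier := {x | ∀ y ∈ U, ∑ t, x t * y t = 0}
  add_mem' := by
    intro a b ha hb y hy
    have h : ∑ t, (a t * y t + b t * y t) = 0 := by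
      rw [Finset.sum_add_distrib, ha y hy, hb y hy, add_zero]
    simpa [add_mul] using h
  zero_mem' := by intro y hy; simp
  smul_mem' := by
    intro c a ha y hy
    have h := ha y hy
    simp only [Pi.smul_apply, smul_eq_mul, mul_assoc]
    rw [← Finset.mul_sum, h, mul_zero]

/-- A subspace is perfect if it is spanned by the simple (rank-one) tensors it contains. -/
def IsPerfect (A : Submodule K (((i : Fin r) → Fin (n i)) → K)) : Prop :=
  A = Submodule.span K ((A : Set (((i : Fin r) → Fin (n i)) → K)) ∩
    {X | ∃ u : ∀ i, Fin (n i) → K, X = simpleTensor u})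

/-- The tensor rank of an `r`-tensor: the least number of simple tensors summing to it. -/
def trank (X : ((i : Fin r) → Fin (n i)) → K) : ℕ :=
  sInf {R | ∃ u : Fin R → ∀ i, Fin (n i) → K, X = ∑ s, simpleTensor (u s)}

/-- The minimum tensor-rank distance of a (nonzero) tensor code. -/
def minDist (C : Submodule K (((i : Fin r) → Fin (n i)) → K)) : ℕ :=
  sInf {d | ∃ X ∈ C, X ≠ (0 : ((i : Fin r) → Fin (n i)) → K) ∧ trank X = d}

/-- The tensor rank of a tensor code: the minimum dimension of a perfect space containing it. -/
def trk (C : Submodule K (((i : Fin r) → Fin (n i)) → K)) : ℕ :=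
  sInf {a | ∃ A : Submodule K (((i : Fin r) → Fin (n i)) → K),
    IsPerfect A ∧ C ≤ A ∧ Module.finrank K ↥A = a}

/-- The `j`-th generalized tensor weight of `C` with respect to a collection `𝒜` of
anticodes:  the minimum dimension of a member of `𝒜` meeting `C` in dimension at least `j`. -/
def genW {V : Type} [AddCommGroup V] [Module K V] (𝒜 : Set (Submodule K V))
    (C : Submodule K V) (j : ℕ) : ℕ :=
  sInf {a | ∃ A ∈ 𝒜, Module.finrank K ↥A = a ∧ j ≤ Module.finrank K ↥(C ⊓ A)}


/-- `W_{A'}^{(j)}`: the number of `j`-dimensional subspaces `D ≤ C ∩ A'` for which `A'`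
is the minimal member of the lattice `𝒜` containing `D`. -/
def WW (𝒜 : Finset (Submodule K (((i : Fin r) → Fin (n i)) → K)))
    (C : Submodule K (((i : Fin r) → Fin (n i)) → K)) (j : ℕ)
    (A' : Submodule K (((i : Fin r) → Fin (n i)) → K)) : ℕ :=
  Set.ncard {D : Submodule K (((i : Fin r) → Fin (n i)) → K) |
    Module.finrank K ↥D = j ∧ D ≤ C ⊓ A' ∧ ∀ B ∈ 𝒜, D ≤ B → A' ≤ B}

/-! ### Auxiliary lemmas -/

private lemma aux_delta {α : Type*} [PartialOrder α] (s : Finset α)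
    (μ : α → α → ℚ) (hμ1 : ∀ A ∈ s, μ A A = 1)
    (hrow : ∀ A ∈ s, ∀ A' ∈ s, A < A' →
      ∑ B ∈ s.filter (fun B => A ≤ B ∧ B ≤ A'), μ A B = 0)
    {B A : α} (hB : B ∈ s) (hA : A ∈ s) (hBA : B ≤ A) :
    ∑ A' ∈ s.filter (fun A' => B ≤ A' ∧ A' ≤ A), μ B A' = (if B = A then 1 else 0) := by
  rcases eq_or_lt_of_le hBA with rfl | hlt
  · have hfil : s.filter (fun A' => B ≤ A' ∧ A' ≤ B) = {B} := by
      ext x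
      simp only [Finset.mem_filter, Finset.mem_singleton]
      constructor
      · rintro ⟨_, h1, h2⟩; exact le_antisymm h2 h1
      · rintro rfl; exact ⟨hB, le_rfl, le_rfl⟩
    rw [hfil, Finset.sum_singleton, hμ1 B hB, if_pos rfl]
  · rw [hrow B hB A hA hlt, if_neg (ne_of_lt hlt)]

private lemma aux_inversion {α : Type*} [PartialOrder α] (s : Finset α)
    (μ : α → α → ℚ) (hμ1 : ∀ A ∈ s, μ A A = 1)
    (hrow : ∀ A ∈ s, ∀ A' ∈ s, A < A' →
      ∑ B ∈ s.filter (fun B => A ≤ B ∧ B ≤ A'), μ A B = 0)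
    (f g : α → ℚ) (hfg : ∀ A ∈ s, f A = ∑ A' ∈ s.filter (fun A' => A' ≤ A), g A') :
    ∀ A' ∈ s, g A' = ∑ A ∈ s.filter (fun A => A ≤ A'), μ A A' * f A := by
  set g' : α → ℚ := fun A' => ∑ A ∈ s.filter (fun A => A ≤ A'), μ A A' * f A with hg'
  have hsum : ∀ A ∈ s, ∑ A' ∈ s.filter (fun A' => A' ≤ A), g' A' = f A := by
    intro A hA
    have h1 : ∑ A' ∈ s.filter (fun A' => A' ≤ A), g' A'
        = ∑ A' ∈ s, ∑ B ∈ s, if B ≤ A' ∧ A' ≤ A then μ B A' * f B else 0 := by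
      rw [Finset.sum_filter]
      refine Finset.sum_congr rfl fun A' _ => ?_
      by_cases h : A' ≤ A
      · simp only [h, and_true, if_true, hg', Finset.sum_filter]
      · simp [h]
    rw [h1, Finset.sum_comm]
    have h2 : ∀ B ∈ s, (∑ A' ∈ s, if B ≤ A' ∧ A' ≤ A then μ B A' * f B else 0)
        = if B = A then f B else 0 := by
      intro B hB
      rw [← Finset.sum_filter]
      by_cases hBA : B ≤ A
      · rw [← Finset.sum_mul, aux_delta s μ hμ1 hrow hB hA hBA, ite_mul, one_mul, zero_mul]
      · have hempty : s.filter (fun A' => B ≤ A' ∧ A' ≤ A) = ∅ := by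
          ext x
          simp only [Finset.mem_filter, Finset.notMem_empty, iff_false, not_and]
          intro _ h1 h2
          exact hBA (h1.trans h2)
        rw [hempty, Finset.sum_empty, if_neg (by rintro rfl; exact hBA le_rfl)]
    rw [Finset.sum_congr rfl h2, Finset.sum_ite_eq' s A f, if_pos hA]
  have key : ∀ N : ℕ, ∀ x ∈ s, (s.filter (fun y => y < x)).card ≤ N → g x = g' x := by
    intro N
    induction N with
    | zero =>
      intro x hx hc
      have h0 : ∑ A' ∈ s.filter (fun A' => A' ≤ x), (g A' - g' A') = 0 := by
        rw [Finset.sum_sub_distrib, ← hfg x hx, hsum x hx, sub_self]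
      have hempty : s.filter (fun y => y < x) = ∅ := Finset.card_eq_zero.mp (Nat.le_zero.mp hc)
      have hfil : s.filter (fun A' => A' ≤ x) = {x} := by
        ext y
        simp only [Finset.mem_filter, Finset.mem_singleton]
        constructor
        · rintro ⟨hys, hyx⟩
          rcases eq_or_lt_of_le hyx with h | h
          · exact h
          · have hmem : y ∈ s.filter (fun z => z < x) := Finset.mem_filter.mpr ⟨hys, h⟩
            rw [hempty] at hmem
            exact absurd hmem (Finset.notMem_empty y)
        · rintro rfl; exact ⟨hx, le_rfl⟩
      rw [hfil, Finset.sum_singleton] at h0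
      linarith
    | succ N ih =>
      intro x hx hc
      have h0 : ∑ A' ∈ s.filter (fun A' => A' ≤ x), (g A' - g' A') = 0 := by
        rw [Finset.sum_sub_distrib, ← hfg x hx, hsum x hx, sub_self]
      have hins : s.filter (fun A' => A' ≤ x) = insert x (s.filter (fun y => y < x)) := by
        ext y
        simp only [Finset.mem_filter, Finset.mem_insert]
        constructor
        · rintro ⟨hys, hyx⟩
          rcases eq_or_lt_of_le hyx with h | h
          · exact Or.inl h
          · exact Or.inr ⟨hys, h⟩
        · rintro (rfl | ⟨hys, h⟩)
          · exact ⟨hx, le_rfl⟩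
          · exact ⟨hys, le_of_lt h⟩
      have hxnot : x ∉ s.filter (fun y => y < x) := by simp
      rw [hins, Finset.sum_insert hxnot] at h0
      have hz : ∀ y ∈ s.filter (fun y => y < x), g y - g' y = 0 := by
        intro y hy
        obtain ⟨hys, hyx⟩ := Finset.mem_filter.mp hy
        have hsubset : s.filter (fun z => z < y) ⊆ s.filter (fun y => y < x) := by
          intro z hz
          obtain ⟨hzs, hzy⟩ := Finset.mem_filter.mp hz
          exact Finset.mem_filter.mpr ⟨hzs, hzy.trans hyx⟩
        have hlt : (s.filter (fun z => z < y)).card < (s.filter (fun y => y < x)).card := by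
          apply Finset.card_lt_card
          rw [Finset.ssubset_iff_of_subset hsubset]
          exact ⟨y, hy, by simp⟩
        have := ih y hys (Nat.lt_succ_iff.mp (hlt.trans_le hc))
        linarith
      rw [Finset.sum_eq_zero hz] at h0
      linarith
  intro A' hA'
  exact key _ A' hA' le_rfl

attribute [local instance] Fintype.ofFinite

private lemma aux_card_subspaces (V : Type) [AddCommGroup V] [Module K V] [Finite V] {j : ℕ}
    (hj : j ≤ Module.finrank K V) :
    Nat.card {D : Submodule K V // Module.finrank K ↥D = j} *
        ∏ i ∈ Finset.range j, (Fintype.card K ^ j - Fintype.card K ^ i) =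
      ∏ i ∈ Finset.range j, (Fintype.card K ^ Module.finrank K V - Fintype.card K ^ i) := by
  haveI : Module.Finite K V := Module.Finite.of_finite
  haveI : Finite (Submodule K V) :=
    Finite.of_injective (fun D => (D : Set V)) SetLike.coe_injective
  set q := Fintype.card K with hqdef
  let F : {s : Fin j → V // LinearIndependent K s} →
      {D : Submodule K V // Module.finrank K ↥D = j} :=
    fun s => ⟨Submodule.span K (Set.range s.1), by
      rw [finrank_span_eq_card s.2, Fintype.card_fin]⟩
  have hfiber : ∀ D : {D : Submodule K V // Module.finrank K ↥D = j},
      Nat.card {s // F s = D} = ∏ i ∈ Finset.range j, (q ^ j - q ^ i) := by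
    intro D
    have hDfin : Module.finrank K ↥D.1 = j := D.2
    have hmem : ∀ (s : {s // F s = D}) (i : Fin j), s.1.1 i ∈ D.1 := by
      intro s i
      have hspan : Submodule.span K (Set.range s.1.1) = D.1 := congrArg Subtype.val s.2
      rw [← hspan]
      exact Submodule.subset_span (Set.mem_range_self i)
    let lift : {s // F s = D} → {t : Fin j → ↥D.1 // LinearIndependent K t} :=
      fun s => ⟨fun i => ⟨s.1.1 i, hmem s i⟩, LinearIndependent.of_comp D.1.subtype s.1.2⟩
    let down : {t : Fin j → ↥D.1 // LinearIndependent K t} → {s // F s = D} := by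
      intro t
      have hLI : LinearIndependent K (fun i => (t.1 i : V)) :=
        t.2.map' D.1.subtype (Submodule.ker_subtype _)
      refine ⟨⟨fun i => (t.1 i : V), hLI⟩, Subtype.ext ?_⟩
      apply Submodule.eq_of_le_of_finrank_eq
      · rw [Submodule.span_le]
        rintro _ ⟨i, rfl⟩
        exact (t.1 i).2
      · rw [finrank_span_eq_card hLI, Fintype.card_fin, hDfin]
    have e : {s // F s = D} ≃ {t : Fin j → ↥D.1 // LinearIndependent K t} :=
      ⟨lift, down, fun s => Subtype.ext (Subtype.ext rfl),
        fun t => Subtype.ext (funext fun i => Subtype.ext rfl)⟩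
    rw [Nat.card_congr e, card_linearIndependent (le_of_eq hDfin.symm), hDfin]
    exact Fin.prod_univ_eq_prod_range (fun i => q ^ j - q ^ i) j
  have hQ := card_linearIndependent (K := K) (V := V) hj
  have hsig := Nat.card_congr (Equiv.sigmaFiberEquiv F).symm
  rw [hQ] at hsig
  have h3 : Nat.card ((D : {D : Submodule K V // Module.finrank K ↥D = j}) × {s // F s = D})
      = ∑ D : {D : Submodule K V // Module.finrank K ↥D = j}, Nat.card {s // F s = D} := by
    simp [Nat.card_eq_fintype_card]
  rw [h3] at hsig
  rw [Finset.sum_congr rfl (fun D _ => hfiber D)] at hsig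
  rw [Finset.sum_const, Finset.card_univ, smul_eq_mul] at hsig
  rw [Nat.card_eq_fintype_card, ← hsig]
  exact Fin.prod_univ_eq_prod_range (fun i => q ^ Module.finrank K V - q ^ i) j

private lemma aux_card_subspaces_zero (V : Type) [AddCommGroup V] [Module K V] [Finite V]
    {j : ℕ} (hj : Module.finrank K V < j) :
    Nat.card {D : Submodule K V // Module.finrank K ↥D = j} = 0 := by
  haveI : Module.Finite K V := Module.Finite.of_finite
  haveI : IsEmpty {D : Submodule K V // Module.finrank K ↥D = j} := by
    constructor
    rintro ⟨D, hD⟩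
    exact absurd (hD ▸ Submodule.finrank_le D) (not_le.mpr hj)
  exact Nat.card_of_isEmpty

private lemma aux_qbin_eq_card (V : Type) [AddCommGroup V] [Module K V] [Finite V] (j : ℕ) :
    qbin (Fintype.card K : ℚ) (Module.finrank K V : ℤ) (j : ℤ)
      = (Nat.card {D : Submodule K V // Module.finrank K ↥D = j} : ℚ) := by
  haveI : Module.Finite K V := Module.Finite.of_finite
  set q := Fintype.card K with hqdef
  have hq1 : 1 < q := Fintype.one_lt_card
  have hq1' : (1 : ℚ) < (q : ℚ) := by exact_mod_cast hq1
  have hq0 : (q : ℚ) ≠ 0 := by positivity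
  set m := Module.finrank K V with hmdef
  rcases Nat.eq_zero_or_pos j with rfl | hjpos
  · have h1 : qbin (q : ℚ) (m : ℤ) ((0 : ℕ) : ℤ) = 1 := by
      simp [qbin]
    rw [h1]
    haveI : Unique {D : Submodule K V // Module.finrank K ↥D = 0} :=
      { default := ⟨⊥, by simp⟩
        uniq := by
          rintro ⟨D, hD⟩
          exact Subtype.ext (Submodule.finrank_eq_zero.mp hD) }
    rw [Nat.card_unique]
    norm_num
  · have hbneg : ¬ ((j : ℤ) < 0) := by omega
    have hbne : (j : ℤ) ≠ 0 := by exact_mod_cast hjpos.ne'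
    have haneg : ¬ ((m : ℤ) < 0) := by omega
    rcases lt_or_ge m j with hmj | hjm
    · rw [qbin, if_neg hbneg, if_neg hbne, if_neg haneg, if_pos (by exact_mod_cast hmj),
        aux_card_subspaces_zero V hmj]
      norm_num
    · rw [qbin, if_neg hbneg, if_neg hbne, if_neg haneg,
        if_neg (by exact_mod_cast not_lt.mpr hjm)]
      have htoNat : ((j : ℤ)).toNat = j := Int.toNat_natCast j
      rw [htoNat]
      have hterm : ∀ i ∈ Finset.range j,
          ((q : ℚ) ^ ((m : ℤ) - (i : ℤ)) - 1) / ((q : ℚ) ^ ((i : ℤ) + 1) - 1)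
            = ((q : ℚ) ^ (m - i) - 1) / ((q : ℚ) ^ (i + 1) - 1) := by
        intro i hi
        have him : i ≤ m := le_trans (Finset.mem_range.mp hi).le hjm
        have h1 : (m : ℤ) - (i : ℤ) = ((m - i : ℕ) : ℤ) := by omega
        have h2 : ((i : ℤ) + 1) = ((i + 1 : ℕ) : ℤ) := by omega
        rw [h1, h2, zpow_natCast, zpow_natCast]
      rw [Finset.prod_congr rfl hterm, Finset.prod_div_distrib]
      have hA : ∏ i ∈ Finset.range j, ((q : ℚ) ^ m - (q : ℚ) ^ i)
          = (∏ i ∈ Finset.range j, (q : ℚ) ^ i) *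
              ∏ i ∈ Finset.range j, ((q : ℚ) ^ (m - i) - 1) := by
        rw [← Finset.prod_mul_distrib]
        refine Finset.prod_congr rfl fun i hi => ?_
        have him : i ≤ m := le_trans (Finset.mem_range.mp hi).le hjm
        rw [mul_sub, mul_one, ← pow_add, Nat.add_sub_cancel' him]
      have hBrefl : ∏ i ∈ Finset.range j, ((q : ℚ) ^ (j - i) - 1)
          = ∏ i ∈ Finset.range j, ((q : ℚ) ^ (i + 1) - 1) := by
        rw [← Finset.prod_range_reflect (fun i => (q : ℚ) ^ (i + 1) - 1) j]
        refine Finset.prod_congr rfl fun i hi => ?_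
        have h' : j - 1 - i + 1 = j - i := by
          have := Finset.mem_range.mp hi
          omega
        simp only [h']
      have hP : ∏ i ∈ Finset.range j, ((q : ℚ) ^ j - (q : ℚ) ^ i)
          = (∏ i ∈ Finset.range j, (q : ℚ) ^ i) *
              ∏ i ∈ Finset.range j, ((q : ℚ) ^ (i + 1) - 1) := by
        rw [← hBrefl, ← Finset.prod_mul_distrib]
        refine Finset.prod_congr rfl fun i hi => ?_
        have hij : i ≤ j := (Finset.mem_range.mp hi).le
        rw [mul_sub, mul_one, ← pow_add, Nat.add_sub_cancel' hij]
      have hPne : (∏ i ∈ Finset.range j, ((q : ℚ) ^ j - (q : ℚ) ^ i)) ≠ 0 := by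
        rw [Finset.prod_ne_zero_iff]
        intro i hi
        have : (q : ℚ) ^ i < (q : ℚ) ^ j :=
          pow_lt_pow_right₀ hq1' (Finset.mem_range.mp hi)
        exact sub_ne_zero.mpr (ne_of_gt this)
      have hPc : ((∏ i ∈ Finset.range j, (q ^ j - q ^ i) : ℕ) : ℚ)
          = ∏ i ∈ Finset.range j, ((q : ℚ) ^ j - (q : ℚ) ^ i) := by
        rw [Nat.cast_prod]
        refine Finset.prod_congr rfl fun i hi => ?_
        have hle : q ^ i ≤ q ^ j :=
          Nat.pow_le_pow_right (by omega) (Finset.mem_range.mp hi).le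
        rw [Nat.cast_sub hle, Nat.cast_pow, Nat.cast_pow]
      have hQc : ((∏ i ∈ Finset.range j, (q ^ m - q ^ i) : ℕ) : ℚ)
          = ∏ i ∈ Finset.range j, ((q : ℚ) ^ m - (q : ℚ) ^ i) := by
        rw [Nat.cast_prod]
        refine Finset.prod_congr rfl fun i hi => ?_
        have hle : q ^ i ≤ q ^ m :=
          Nat.pow_le_pow_right (by omega) (le_trans (Finset.mem_range.mp hi).le hjm)
        rw [Nat.cast_sub hle, Nat.cast_pow, Nat.cast_pow]
      have hcast : (Nat.card {D : Submodule K V // Module.finrank K ↥D = j} : ℚ) *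
          (∏ i ∈ Finset.range j, ((q : ℚ) ^ j - (q : ℚ) ^ i))
            = ∏ i ∈ Finset.range j, ((q : ℚ) ^ m - (q : ℚ) ^ i) := by
        rw [← hPc, ← hQc, ← Nat.cast_mul]
        exact_mod_cast congrArg (Nat.cast (R := ℚ)) (aux_card_subspaces V hjm)
      have hN : (Nat.card {D : Submodule K V // Module.finrank K ↥D = j} : ℚ)
          = (∏ i ∈ Finset.range j, ((q : ℚ) ^ m - (q : ℚ) ^ i)) /
              (∏ i ∈ Finset.range j, ((q : ℚ) ^ j - (q : ℚ) ^ i)) :=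
        (eq_div_iff hPne).mpr hcast
      have hprodq : (∏ i ∈ Finset.range j, (q : ℚ) ^ i) ≠ 0 := by
        rw [Finset.prod_ne_zero_iff]
        intro i hi
        positivity
      rw [hN, hA, hP, mul_div_mul_left _ _ hprodq]

private lemma aux_ncard_le (V : Type) [AddCommGroup V] [Module K V] [Finite V]
    (W : Submodule K V) (j : ℕ) :
    Nat.card {D : Submodule K ↥W // Module.finrank K ↥D = j}
      = Set.ncard {D : Submodule K V | Module.finrank K ↥D = j ∧ D ≤ W} := by
  rw [← Nat.card_coe_set_eq]
  apply Nat.card_congr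
  refine Equiv.trans
    ((Submodule.MapSubtype.orderIso W).toEquiv.subtypeEquiv
      (p := fun D : Submodule K ↥W => Module.finrank K ↥D = j)
      (q := fun x : {p' : Submodule K V // p' ≤ W} => Module.finrank K ↥x.1 = j)
      fun D => ?_) ?_
  · show Module.finrank K ↥D = j ↔ Module.finrank K ↥(Submodule.map W.subtype D) = j
    rw [Submodule.finrank_map_subtype_eq]
  · refine (Equiv.subtypeSubtypeEquivSubtypeInter (fun D : Submodule K V => D ≤ W)
      (fun D => Module.finrank K ↥D = j)).trans (Equiv.subtypeEquivRight fun D => ?_)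
    simp only [Set.mem_setOf_eq]
    tauto

private lemma aux_partition {V : Type} [AddCommGroup V] [Module K V] [Finite V]
    (𝒜 : Finset (Submodule K V))
    (hmeet : ∀ A ∈ 𝒜, ∀ B ∈ 𝒜, A ⊓ B ∈ 𝒜)
    (C : Submodule K V) (j : ℕ)
    {A : Submodule K V} (hA : A ∈ 𝒜) :
    Set.ncard {D : Submodule K V | Module.finrank K ↥D = j ∧ D ≤ C ⊓ A}
      = ∑ A' ∈ 𝒜.filter (fun A' => A' ≤ A),
          Set.ncard {D : Submodule K V | Module.finrank K ↥D = j ∧ D ≤ C ⊓ A' ∧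
            ∀ B ∈ 𝒜, D ≤ B → A' ≤ B} := by
  haveI : Finite (Submodule K V) :=
    Finite.of_injective (fun D => (D : Set V)) SetLike.coe_injective
  set mm : Submodule K V → Submodule K V := fun D =>
    if h : (𝒜.filter fun B => D ≤ B).Nonempty then (𝒜.filter fun B => D ≤ B).inf' h id
    else ⊤ with hmm
  have hm_eq : ∀ (D : Submodule K V) (h : (𝒜.filter fun B => D ≤ B).Nonempty),
      mm D = (𝒜.filter fun B => D ≤ B).inf' h id := fun D h => dif_pos h
  rw [Set.ncard_eq_toFinset_card']
  have hmap : ∀ D ∈ {D : Submodule K V |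
      Module.finrank K ↥D = j ∧ D ≤ C ⊓ A}.toFinset, mm D ∈ 𝒜.filter (fun A' => A' ≤ A) := by
    intro D hD
    rw [Set.mem_toFinset] at hD
    obtain ⟨hDj, hDCA⟩ := hD
    have hne : (𝒜.filter fun B => D ≤ B).Nonempty :=
      ⟨A, Finset.mem_filter.mpr ⟨hA, hDCA.trans inf_le_right⟩⟩
    rw [Finset.mem_filter, hm_eq D hne]
    constructor
    · exact Finset.mem_coe.mp (Finset.inf'_mem (↑𝒜 : Set (Submodule K V))
        (fun x hx y hy => hmeet x hx y hy) _ hne id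
        (fun B hB => (Finset.mem_filter.mp hB).1))
    · exact Finset.inf'_le id (Finset.mem_filter.mpr ⟨hA, hDCA.trans inf_le_right⟩)
  rw [Finset.card_eq_sum_card_fiberwise hmap]
  refine Finset.sum_congr rfl fun A' hA' => ?_
  rw [Set.ncard_eq_toFinset_card']
  congr 1
  obtain ⟨hA's, hA'A⟩ := Finset.mem_filter.mp hA'
  ext D
  simp only [Finset.mem_filter, Set.mem_toFinset, Set.mem_setOf_eq]
  constructor
  · rintro ⟨⟨hDj, hDCA⟩, hmD⟩
    have hne : (𝒜.filter fun B => D ≤ B).Nonempty :=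
      ⟨A, Finset.mem_filter.mpr ⟨hA, hDCA.trans inf_le_right⟩⟩
    have hDA' : D ≤ A' := by
      rw [← hmD, hm_eq D hne]
      exact Finset.le_inf' hne id fun B hB => (Finset.mem_filter.mp hB).2
    refine ⟨hDj, le_inf (hDCA.trans inf_le_left) hDA', fun B hB hDB => ?_⟩
    rw [← hmD, hm_eq D hne]
    exact Finset.inf'_le id (Finset.mem_filter.mpr ⟨hB, hDB⟩)
  · rintro ⟨hDj, hDCA', hmin⟩
    have hDA' : D ≤ A' := hDCA'.trans inf_le_right
    have hne : (𝒜.filter fun B => D ≤ B).Nonempty :=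
      ⟨A', Finset.mem_filter.mpr ⟨hA's, hDA'⟩⟩
    refine ⟨⟨hDj, le_inf (hDCA'.trans inf_le_left) (hDA'.trans hA'A)⟩, ?_⟩
    rw [hm_eq D hne]
    refine le_antisymm (Finset.inf'_le id (Finset.mem_filter.mpr ⟨hA's, hDA'⟩))
      (Finset.le_inf' hne id fun B hB =>
        hmin B (Finset.mem_filter.mp hB).1 (Finset.mem_filter.mp hB).2)

/-- for a finite lattice `𝒜` of subspaces with Möbius function `μ`, the
binomial moments `B_A^{(j)} = [dim(C∩A), j]_q` and the counts `W_{A'}^{(j)}` satisfy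
`B_A^{(j)} = ∑_{A' ≤ A} W_{A'}^{(j)}` and, by Möbius inversion,
`W_{A'}^{(j)} = ∑_{A ≤ A'} μ(A, A') B_A^{(j)}`. -/
theorem moebius_W_B (𝒜 : Finset (Submodule K (((i : Fin r) → Fin (n i)) → K)))
    (hmeet : ∀ A ∈ 𝒜, ∀ B ∈ 𝒜, A ⊓ B ∈ 𝒜)
    (C : Submodule K (((i : Fin r) → Fin (n i)) → K)) (j : ℕ)
    (μ : Submodule K (((i : Fin r) → Fin (n i)) → K) →
      Submodule K (((i : Fin r) → Fin (n i)) → K) → ℤ)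
    (hμ0 : ∀ A A', ¬ A ≤ A' → μ A A' = 0)
    (hμ1 : ∀ A ∈ 𝒜, μ A A = 1)
    (hμ2 : ∀ A ∈ 𝒜, ∀ A' ∈ 𝒜, A < A' →
      μ A A' = -∑ B ∈ 𝒜.filter (fun B => A ≤ B ∧ B < A'), μ A B) :
    (∀ A ∈ 𝒜,
        qbin (Fintype.card K : ℚ) (Module.finrank K ↥(C ⊓ A) : ℤ) (j : ℤ)
          = ∑ A' ∈ 𝒜.filter (fun A' => A' ≤ A), (WW 𝒜 C j A' : ℚ))
      ∧ (∀ A' ∈ 𝒜,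
        (WW 𝒜 C j A' : ℚ)
          = ∑ A ∈ 𝒜.filter (fun A => A ≤ A'),
              (μ A A' : ℚ) * qbin (Fintype.card K : ℚ)
                (Module.finrank K ↥(C ⊓ A) : ℤ) (j : ℤ)) := by
  have part1 : ∀ A ∈ 𝒜,
      qbin (Fintype.card K : ℚ) (Module.finrank K ↥(C ⊓ A) : ℤ) (j : ℤ)
        = ∑ A' ∈ 𝒜.filter (fun A' => A' ≤ A), (WW 𝒜 C j A' : ℚ) := by
    intro A hA
    rw [aux_qbin_eq_card (↥(C ⊓ A)) j, aux_ncard_le _ (C ⊓ A) j,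
      aux_partition 𝒜 hmeet C j hA, Nat.cast_sum]
    rfl
  refine ⟨part1, ?_⟩
  have hrow : ∀ A ∈ 𝒜, ∀ A' ∈ 𝒜, A < A' →
      ∑ B ∈ 𝒜.filter (fun B => A ≤ B ∧ B ≤ A'), ((μ A B : ℚ)) = 0 := by
    intro A hA A' hA' hlt
    have hins : 𝒜.filter (fun B => A ≤ B ∧ B ≤ A') =
        insert A' (𝒜.filter (fun B => A ≤ B ∧ B < A')) := by
      ext B
      simp only [Finset.mem_filter, Finset.mem_insert]
      constructor
      · rintro ⟨hBs, hAB, hBA'⟩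
        rcases eq_or_lt_of_le hBA' with h | h
        · exact Or.inl h
        · exact Or.inr ⟨hBs, hAB, h⟩
      · rintro (rfl | ⟨hBs, hAB, h⟩)
        · exact ⟨hA', le_of_lt hlt, le_rfl⟩
        · exact ⟨hBs, hAB, le_of_lt h⟩
    rw [hins, Finset.sum_insert (by simp)]
    rw [show ((μ A A' : ℤ) : ℚ) = ((μ A A' : ℤ) : ℚ) from rfl, hμ2 A hA A' hA' hlt]
    push_cast
    ring
  exact aux_inversion 𝒜 (fun A A' => (μ A A' : ℚ))
    (fun A hA => by show ((μ A A : ℤ) : ℚ) = 1; rw [hμ1 A hA]; norm_num) hrow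
    (fun A => qbin (Fintype.card K : ℚ) (Module.finrank K ↥(C ⊓ A) : ℤ) (j : ℤ))
    (fun A' => (WW 𝒜 C j A' : ℚ)) part1

end TensorCodes
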